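/- There is a bijection between the set 𝒞_{n+1} of Dyck words of length 2n+2 (words over {−1,1} summing to 0 with nonnegative partial sums) and the set 𝒢'_n of words of length n+1 over {−1, 0, 0̄, 1} summing to 0 (with 0̄ valued 0), with all partial sums nonnegative, such that the partial sum before every occurrence of 0̄ is strictly positive. The bijection is given by applying to consecutive pairs the map f with f(1,1) = 1, f(1,−1) = 0, f(−1,1) = 0̄, f(−1,−1) = −1. -/

import Mathlib

inductive Letter : Type
  | up | zero | zbar | down
deriving DecidableEq

def val : Letter → ℤ
  | .up => 1
  | .zero => 0
  | .zbar => 0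
  | .down => -1

def f (a b : ℤ) : Letter :=
  if a = 1 then (if b = 1 then .up else .zero)
  else (if b = 1 then .zbar else .down)

def pairMap : List ℤ → List Letter
  | a :: b :: rest => f a b :: pairMap rest
  | _ => []

/-- Dyck words of length 2n -/
def Cset (n : ℕ) : Set (List ℤ) :=
  {w | w.length = 2 * n ∧ (∀ x ∈ w, x = 1 ∨ x = -1) ∧ w.sum = 0 ∧
    ∀ p, p <+: w → 0 ≤ p.sum}

/-- The set 𝒢'_n -/
def Gset' (n : ℕ) : Set (List Letter) :=
  {w | w.length = n + 1 ∧ (w.map val).sum = 0 ∧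
    (∀ p, p <+: w → 0 ≤ (p.map val).sum) ∧
    ∀ p t, w = p ++ Letter.zbar :: t → 0 < (p.map val).sum}

def g : Letter → List ℤ
  | .up => [1, 1]
  | .zero => [1, -1]
  | .zbar => [-1, 1]
  | .down => [-1, -1]

def unpair : List Letter → List ℤ
  | [] => []
  | l :: rest => g l ++ unpair rest

lemma g_f (a b : ℤ) (ha : a = 1 ∨ a = -1) (hb : b = 1 ∨ b = -1) : g (f a b) = [a, b] := by
  rcases ha with rfl | rfl <;> rcases hb with rfl | rfl <;> norm_num [f, g]

lemma two_val_f (a b : ℤ) (ha : a = 1 ∨ a = -1) (hb : b = 1 ∨ b = -1) :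
    2 * val (f a b) = a + b := by
  rcases ha with rfl | rfl <;> rcases hb with rfl | rfl <;> norm_num [f, val]

lemma f_eq_zbar (a b : ℤ) (ha : a = 1 ∨ a = -1) (hb : b = 1 ∨ b = -1)
    (h : f a b = Letter.zbar) : a = -1 ∧ b = 1 := by
  rcases ha with rfl | rfl <;> rcases hb with rfl | rfl <;> norm_num [f] at h ⊢ <;>
    exact Letter.noConfusion h

lemma pairMap_length : ∀ w : List ℤ, (pairMap w).length = w.length / 2
  | [] => by simp [pairMap]
  | [a] => by simp [pairMap]
  | a :: b :: r => by
      simp [pairMap, pairMap_length r]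
      omega

lemma pairMap_sum : ∀ w : List ℤ, (∀ x ∈ w, x = 1 ∨ x = -1) → w.length % 2 = 0 →
    2 * ((pairMap w).map val).sum = w.sum
  | [] => by simp [pairMap]
  | [a] => by intro _ h; simp at h
  | a :: b :: r => by
      intro hx h
      have hr := pairMap_sum r (fun x hx' => hx x (by simp [hx'])) (by simp at h; omega)
      have h2 := two_val_f a b (hx a (by simp)) (hx b (by simp))
      simp only [pairMap, List.map_cons, List.sum_cons]
      linarith

lemma pairMap_take : ∀ (w : List ℤ) (k : ℕ), pairMap (w.take (2 * k)) = (pairMap w).take k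
  | [], k => by simp [pairMap]
  | [a], k => by
      cases k <;> simp [pairMap] <;> rw [List.take_of_length_le (by simp only [List.length_singleton]; omega)] <;> simp [pairMap]
  | a :: b :: r, 0 => by simp [pairMap]
  | a :: b :: r, (k + 1) => by
      have h : 2 * (k + 1) = 2 * k + 1 + 1 := by ring
      rw [h]
      simp only [List.take_succ_cons, pairMap]
      rw [pairMap_take r k]

lemma zbar_lemma : ∀ (w : List ℤ) (s : ℤ), (∀ x ∈ w, x = 1 ∨ x = -1) →
    (∀ p, p <+: w → 0 ≤ s + p.sum) →
    ∀ p t, pairMap w = p ++ Letter.zbar :: t → 1 ≤ s + 2 * (p.map val).sum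
  | [], s => by intro _ _ p t h; simp [pairMap] at h
  | [a], s => by intro _ _ p t h; simp [pairMap] at h
  | a :: b :: r, s => by
      intro hx hp p t h
      simp only [pairMap] at h
      cases p with
      | nil =>
        simp only [List.nil_append, List.cons.injEq] at h
        obtain ⟨ha, hb⟩ := f_eq_zbar a b (hx a (by simp)) (hx b (by simp)) h.1
        have := hp [a] ⟨b :: r, rfl⟩
        simp at this ⊢
        omega
      | cons c p' =>
        simp only [List.cons_append, List.cons.injEq] at h
        have hv := two_val_f a b (hx a (by simp)) (hx b (by simp))
        have := zbar_lemma r (s + a + b) (fun x hx' => hx x (by simp [hx']))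
          (fun q hq => by
            obtain ⟨u, hu⟩ := hq
            have := hp (a :: b :: q) ⟨u, by simp [hu]⟩
            simp at this ⊢
            linarith)
          p' t h.2
        rw [← h.1]
        simp only [List.map_cons, List.sum_cons]
        linarith

lemma pairMap_unpair : ∀ w : List Letter, pairMap (unpair w) = w
  | [] => rfl
  | l :: rest => by
      cases l <;> simp [unpair, g, pairMap, pairMap_unpair rest] <;> norm_num [f]

lemma unpair_pairMap : ∀ w : List ℤ, (∀ x ∈ w, x = 1 ∨ x = -1) → w.length % 2 = 0 →
    unpair (pairMap w) = w
  | [] => by intro _ _; rfl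
  | [a] => by intro _ h; simp at h
  | a :: b :: r => by
      intro hx h
      simp only [pairMap, unpair, g_f a b (hx a (by simp)) (hx b (by simp))]
      rw [unpair_pairMap r (fun x hx' => hx x (by simp [hx'])) (by simp at h; omega)]
      rfl

lemma unpair_length : ∀ w : List Letter, (unpair w).length = 2 * w.length
  | [] => rfl
  | l :: rest => by
      cases l <;> simp [unpair, g, unpair_length rest] <;> omega

lemma unpair_mem : ∀ w : List Letter, ∀ x ∈ unpair w, x = 1 ∨ x = -1
  | l :: rest, x, hx => by
      cases l <;> simp [unpair, g] at hx <;>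
        first
        | (rcases hx with h | h | h
           · simp [h]
           · simp [h]
           · exact unpair_mem rest x h)
        | (rcases hx with h | h
           · simp [h]
           · exact unpair_mem rest x h)
  | [], x, hx => by simp [unpair] at hx

lemma unpair_sum : ∀ w : List Letter, (unpair w).sum = 2 * (w.map val).sum
  | [] => rfl
  | l :: rest => by
      cases l <;> simp [unpair, g, val, unpair_sum rest] <;> ring

lemma unpair_prefix : ∀ (w : List Letter) (s : ℤ),
    (∀ p, p <+: w → 0 ≤ s + (p.map val).sum) →
    (∀ p t, w = p ++ Letter.zbar :: t → 0 < s + (p.map val).sum) →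
    ∀ q, q <+: unpair w → 0 ≤ 2 * s + q.sum
  | [], s => by
      intro hp _ q hq
      have hs : 0 ≤ s := by simpa using hp [] ⟨[], rfl⟩
      simp [unpair] at hq
      simp [hq]
      linarith
  | l :: rest, s => by
      intro hp hz q hq
      have hs : 0 ≤ s := by simpa using hp [] ⟨l :: rest, rfl⟩
      obtain ⟨u, hu⟩ := hq
      cases q with
      | nil => simp; linarith
      | cons x q1 =>
        cases q1 with
        | nil =>
          cases l <;> simp [unpair, g] at hu
          · simp [hu.1]; linarith
          · simp [hu.1]; linarith
          · have := hz [] rest rfl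
            simp at this
            simp [hu.1]; linarith
          · have := hp [Letter.down] ⟨rest, rfl⟩
            simp [val] at this
            simp [hu.1]; linarith
        | cons y q2 =>
          have key : ∀ (hrec : q2 <+: unpair rest) (hx : x = (g l)[0]!)
              (hy : y = (g l)[1]!), True := fun _ _ _ => trivial
          have hrec : x + y = 2 * val l ∧ q2 <+: unpair rest := by
            cases l <;> simp [unpair, g] at hu <;>
              exact ⟨by simp [hu.1, hu.2.1, val], ⟨u, hu.2.2⟩⟩
          have ih := unpair_prefix rest (s + val l)
            (fun p hpp => by
              obtain ⟨u', hu'⟩ := hpp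
              have := hp (l :: p) ⟨u', by simp [hu']⟩
              simp at this ⊢
              linarith)
            (fun p t hpt => by
              have := hz (l :: p) t (by simp [hpt])
              simp at this ⊢
              linarith)
            q2 hrec.2
          simp only [List.sum_cons]
          linarith [hrec.1]

theorem pairMap_bijOn (n : ℕ) : Set.BijOn pairMap (Cset (n + 1)) (Gset' n) := by
  apply Set.InvOn.bijOn (f' := unpair)
  · constructor
    · intro w hw
      obtain ⟨hl, hx, _, _⟩ := hw
      exact unpair_pairMap w hx (by omega)
    · intro w _
      exact pairMap_unpair w
  · intro w hw
    obtain ⟨hl, hx, hs, hpf⟩ := hw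
    refine ⟨?_, ?_, ?_, ?_⟩
    · rw [pairMap_length, hl]; omega
    · have := pairMap_sum w hx (by omega)
      rw [hs] at this
      linarith
    · intro p hp
      rw [List.prefix_iff_eq_take] at hp
      rw [hp, ← pairMap_take]
      have hmem : ∀ x ∈ w.take (2 * p.length), x = 1 ∨ x = -1 :=
        fun x hx' => hx x (List.mem_of_mem_take hx')
      have hpar : (w.take (2 * p.length)).length % 2 = 0 := by
        rw [List.length_take, hl]; omega
      have h2 := pairMap_sum _ hmem hpar
      have := hpf _ (List.take_prefix (2 * p.length) w)
      linarith
    · intro p t h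
      have := zbar_lemma w 0 hx (by intro q hq; simpa using hpf q hq) p t h
      omega
  · intro w hw
    obtain ⟨hl, hs, hpf, hz⟩ := hw
    refine ⟨?_, unpair_mem w, ?_, ?_⟩
    · rw [unpair_length, hl]
    · rw [unpair_sum, hs]; ring
    · intro q hq
      have := unpair_prefix w 0 (by simpa using hpf) (by simpa using hz) q hq
      linarith
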